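/- For every integer j ≥ 1 and every t ∈ (0,1), κ_j(t) = Σ_{ℓ≥1} ℓ^{j−1} · A_j(t^ℓ) / (1 − t^ℓ)^{j+1}, and this series converges absolutely. -/

import Mathlib

open Real

/-- `κ₁(t) = ∑_{j≥1} j·t^j/(1−t^j)`. -/
noncomputable def kappa1 (t : ℝ) : ℝ :=
  ∑' j : ℕ, ((j : ℝ) + 1) * t ^ (j + 1) / (1 - t ^ (j + 1))

/-- The cumulants `κ_j(t)`, defined recursively by `κ_{j+1}(t) = t·κ_j'(t)`. -/
noncomputable def kappa : ℕ → ℝ → ℝ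
  | 0 => fun _ => 0
  | 1 => kappa1
  | n + 2 => fun t => t * deriv (kappa (n + 1)) t

/-- The Eulerian polynomials, via `A₀ = 1`, `A_{j+1} = t(1−t)A_j' + (j+1)tA_j`. -/
noncomputable def eulerianPoly : ℕ → Polynomial ℝ
  | 0 => 1
  | j + 1 => Polynomial.X * (1 - Polynomial.X) * Polynomial.derivative (eulerianPoly j)
      + ((j : ℝ) + 1) • (Polynomial.X * eulerianPoly j)

lemma eulerianPoly_one : eulerianPoly 1 = Polynomial.X := by
  simp [eulerianPoly]

lemma eulerianPoly_dvd (j : ℕ) (hj : 1 ≤ j) : Polynomial.X ∣ eulerianPoly j := by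
  rcases j with _ | n
  · omega
  · show Polynomial.X ∣ eulerianPoly (n+1)
    rw [eulerianPoly]
    refine dvd_add (Dvd.dvd.mul_right (dvd_mul_right _ _) _) ?_
    rw [Polynomial.smul_eq_C_mul]
    exact Dvd.dvd.mul_left (dvd_mul_right _ _) _

noncomputable def eulD (j : ℕ) (y : ℝ) : ℝ :=
  ((Polynomial.derivative (eulerianPoly j)).eval y * (1 - y)
    + ((j : ℝ) + 1) * (eulerianPoly j).eval y) / (1 - y) ^ (j + 2)

lemma hasDerivAt_eulQuot (j : ℕ) {x : ℝ} (hx : x ≠ 1) :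
    HasDerivAt (fun y => (eulerianPoly j).eval y / (1 - y) ^ (j + 1)) (eulD j x) x := by
  have h1 : (1 : ℝ) - x ≠ 0 := sub_ne_zero.2 (Ne.symm hx)
  have hden : HasDerivAt (fun y : ℝ => (1 - y) ^ (j + 1))
      (((j : ℝ) + 1) * (1 - x) ^ j * (-1)) x := by
    have h := ((hasDerivAt_id x).const_sub 1).pow (j + 1)
    refine h.congr_deriv ?_
    simp only [id_eq]
    push_cast
    ring
  have h := ((eulerianPoly j).hasDerivAt x).div hden (pow_ne_zero _ h1)
  refine h.congr_deriv ?_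
  rw [eulD]
  field_simp
  ring

lemma mul_eulD (j : ℕ) (x : ℝ) :
    x * eulD j x = (eulerianPoly (j + 1)).eval x / (1 - x) ^ (j + 2) := by
  rw [eulD, show eulerianPoly (j+1) = Polynomial.X * (1 - Polynomial.X) *
      Polynomial.derivative (eulerianPoly j) + ((j : ℝ) + 1) • (Polynomial.X * eulerianPoly j)
      from rfl]
  simp only [Polynomial.eval_add, Polynomial.eval_mul, Polynomial.eval_smul, Polynomial.eval_X,
    Polynomial.eval_sub, Polynomial.eval_one, smul_eq_mul]
  ring

/-- the term of the series -/
noncomputable def eterm (j l : ℕ) (t : ℝ) : ℝ :=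
  ((l : ℝ) + 1) ^ (j - 1) * (eulerianPoly j).eval (t ^ (l + 1)) / (1 - t ^ (l + 1)) ^ (j + 1)

lemma summable_aux (j : ℕ) {r : ℝ} (hr0 : 0 < r) (hr1 : r < 1) :
    Summable (fun l : ℕ => ((l : ℝ) + 1) ^ j * r ^ l) := by
  have h := summable_pow_mul_geometric_of_norm_lt_one (R := ℝ) j
    (by rw [Real.norm_eq_abs, abs_of_pos hr0]; exact hr1)
  have h2 : Summable (fun l : ℕ => (((l + 1 : ℕ)) : ℝ) ^ j * r ^ (l + 1)) :=
    h.comp_injective (add_left_injective 1)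
  refine (h2.mul_left r⁻¹).congr fun l => ?_
  push_cast
  field_simp
  ring

lemma exists_poly_bound (P : Polynomial ℝ) (r : ℝ) (hr : 0 ≤ r) :
    ∃ C, 0 ≤ C ∧ ∀ y ∈ Set.Icc (0 : ℝ) r, |P.eval y| ≤ C := by
  obtain ⟨C, hC⟩ := (isCompact_Icc (a := (0:ℝ)) (b := r)).exists_bound_of_continuousOn
    (P.continuous_aeval.continuousOn)
  refine ⟨C, le_trans (norm_nonneg _) (hC 0 ⟨le_refl _, hr⟩), fun y hy => ?_⟩
  simpa [Real.norm_eq_abs] using hC y hy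

lemma exists_eulD_bound (j : ℕ) {r : ℝ} (hr0 : 0 ≤ r) (hr1 : r < 1) :
    ∃ C, 0 ≤ C ∧ ∀ y ∈ Set.Icc (0 : ℝ) r, |eulD j y| ≤ C := by
  have hcont : ContinuousOn (eulD j) (Set.Icc (0 : ℝ) r) := by
    apply ContinuousOn.div
    · fun_prop
    · fun_prop
    · intro y hy
      have : (0:ℝ) < 1 - y := by linarith [hy.2]
      exact pow_ne_zero _ this.ne'
  obtain ⟨C, hC⟩ := (isCompact_Icc (a := (0:ℝ)) (b := r)).exists_bound_of_continuousOn hcont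
  refine ⟨C, le_trans (norm_nonneg _) (hC 0 ⟨le_refl _, hr0⟩), fun y hy => ?_⟩
  simpa [Real.norm_eq_abs] using hC y hy

lemma powMemIoo (l : ℕ) {t : ℝ} (ht : t ∈ Set.Ioo (0 : ℝ) 1) :
    t ^ (l + 1) ∈ Set.Ioo (0 : ℝ) 1 ∧ t ^ (l + 1) ≤ t :=
  ⟨⟨pow_pos ht.1 _, pow_lt_one₀ ht.1.le ht.2 (Nat.succ_ne_zero l)⟩,
    by simpa using pow_le_pow_of_le_one ht.1.le ht.2.le (Nat.one_le_iff_ne_zero.2 (Nat.succ_ne_zero l))⟩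

lemma hasDerivAt_eterm (j l : ℕ) (hj : 1 ≤ j) {x : ℝ} (hx : x ∈ Set.Ioo (0 : ℝ) 1) :
    HasDerivAt (eterm j l) (((l : ℝ) + 1) ^ j * x ^ l * eulD j (x ^ (l + 1))) x := by
  have hx1 : x ^ (l + 1) ≠ 1 := (powMemIoo l hx).1.2.ne
  have h1 : HasDerivAt (fun s : ℝ => s ^ (l + 1)) (((l : ℝ) + 1) * x ^ l) x := by
    have := hasDerivAt_pow (l + 1) x
    refine this.congr_deriv ?_
    simp only [Nat.add_sub_cancel]
    push_cast
    ring
  have h2' : HasDerivAt (fun s : ℝ =>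
      (eulerianPoly j).eval (s ^ (l + 1)) / (1 - s ^ (l + 1)) ^ (j + 1))
      (eulD j (x ^ (l + 1)) * (((l : ℝ) + 1) * x ^ l)) x :=
    HasDerivAt.comp (h := fun s : ℝ => s ^ (l + 1)) x (hasDerivAt_eulQuot j hx1) h1
  have h2 := h2'.const_mul (((l : ℝ) + 1) ^ (j - 1))
  have h3 : eterm j l = fun s : ℝ =>
      ((l : ℝ) + 1) ^ (j - 1) * ((eulerianPoly j).eval (s ^ (l + 1)) / (1 - s ^ (l + 1)) ^ (j + 1)) := by
    funext s
    rw [eterm, mul_div_assoc]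
  rw [h3]
  refine h2.congr_deriv ?_
  have : ((l : ℝ) + 1) ^ (j - 1) * ((l : ℝ) + 1) = ((l : ℝ) + 1) ^ j := by
    rw [← pow_succ]
    congr 1
    omega
  rw [← this]
  ring

lemma t_mul_deriv_term (j l : ℕ) {x : ℝ} (hx : x ∈ Set.Ioo (0 : ℝ) 1) :
    x * (((l : ℝ) + 1) ^ j * x ^ l * eulD j (x ^ (l + 1))) = eterm (j + 1) l x := by
  have h : x * (((l : ℝ) + 1) ^ j * x ^ l * eulD j (x ^ (l + 1)))
      = ((l : ℝ) + 1) ^ j * (x ^ (l + 1) * eulD j (x ^ (l + 1))) := by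
    rw [pow_succ]
    ring
  rw [h, mul_eulD, eterm]
  simp only [Nat.add_sub_cancel]
  ring

lemma summable_abs_eterm (j : ℕ) (hj : 1 ≤ j) {t : ℝ} (ht : t ∈ Set.Ioo (0 : ℝ) 1) :
    Summable (fun l : ℕ => |eterm j l t|) := by
  obtain ⟨Q, hQ⟩ := eulerianPoly_dvd j hj
  obtain ⟨C, hC0, hC⟩ := exists_poly_bound Q t ht.1.le
  have h1t : (0 : ℝ) < 1 - t := by linarith [ht.2]
  have hmaj := ((summable_aux (j - 1) ht.1 ht.2).mul_right (t * C / (1 - t) ^ (j + 1)))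
  refine Summable.of_nonneg_of_le (fun l => abs_nonneg _) (fun l => ?_) hmaj
  have hx := powMemIoo l ht
  set x := t ^ (l + 1) with hxdef
  have hx0 : 0 < x := hx.1.1
  have hx1 : x < 1 := hx.1.2
  have hxt : x ≤ t := hx.2
  have hden : (0 : ℝ) < (1 - x) ^ (j + 1) := pow_pos (by linarith) _
  have hdenle : (1 - t) ^ (j + 1) ≤ (1 - x) ^ (j + 1) :=
    pow_le_pow_left₀ h1t.le (by linarith) _
  have heval : |(eulerianPoly j).eval x| ≤ x * C := by
    rw [hQ]
    simp only [Polynomial.eval_mul, Polynomial.eval_X, abs_mul, abs_of_pos hx0]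
    exact mul_le_mul_of_nonneg_left (hC x ⟨hx0.le, hxt⟩) hx0.le
  calc |eterm j l t| = ((l : ℝ) + 1) ^ (j - 1) * |(eulerianPoly j).eval x| / (1 - x) ^ (j + 1) := by
        rw [eterm, abs_div, abs_mul, abs_pow,
          abs_of_nonneg (by positivity : (0:ℝ) ≤ (l : ℝ) + 1), abs_of_pos hden]
    _ ≤ ((l : ℝ) + 1) ^ (j - 1) * (x * C) / (1 - t) ^ (j + 1) := by
        apply div_le_div₀ (by positivity)
          (mul_le_mul_of_nonneg_left heval (by positivity)) (pow_pos h1t _) hdenle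
    _ = ((l : ℝ) + 1) ^ (j - 1) * t ^ l * (t * C / (1 - t) ^ (j + 1)) := by
        rw [hxdef, pow_succ]
        ring

lemma kappa1_eq {t : ℝ} (ht : t ∈ Set.Ioo (0 : ℝ) 1) :
    kappa1 t = ∑' l : ℕ, eterm 1 l t := by
  set a : ℕ → ℕ → ℝ := fun l k => ((l : ℝ) + 1) * t ^ ((l + 1) * (k + 1)) with ha
  have hy : ∀ l : ℕ, t ^ (l + 1) ∈ Set.Ioo (0 : ℝ) 1 := fun l => (powMemIoo l ht).1
  have hrow : ∀ l : ℕ, HasSum (fun k => a l k)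
      (((l : ℝ) + 1) * t ^ (l + 1) / (1 - t ^ (l + 1))) := by
    intro l
    have hg := hasSum_geometric_of_lt_one (hy l).1.le (hy l).2
    have h := (hg.mul_left (t ^ (l + 1))).mul_left ((l : ℝ) + 1)
    have h2 : HasSum (fun k : ℕ => ((l : ℝ) + 1) * (t ^ (l + 1) * (t ^ (l + 1)) ^ k))
        (((l : ℝ) + 1) * t ^ (l + 1) / (1 - t ^ (l + 1))) := by
      refine (congrArg (HasSum _) ?_).mpr h
      field_simp
    refine h2.congr_fun fun k => ?_
    rw [ha]
    simp only
    rw [← pow_succ', ← pow_mul]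
  have hcol : ∀ l : ℕ, HasSum (fun k => a k l) (eterm 1 l t) := by
    intro l
    have hnorm : ‖t ^ (l + 1)‖ < 1 := by
      rw [Real.norm_eq_abs, abs_of_pos (hy l).1]; exact (hy l).2
    have hbase := hasSum_coe_mul_geometric_of_norm_lt_one hnorm
    have hshift : HasSum (fun k : ℕ => ((k + 1 : ℕ) : ℝ) * (t ^ (l + 1)) ^ (k + 1))
        (t ^ (l + 1) / (1 - t ^ (l + 1)) ^ 2) := by
      refine (hasSum_nat_add_iff (f := fun n : ℕ => (n : ℝ) * (t ^ (l + 1)) ^ n) 1).2 ?_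
      simpa using hbase
    have he : eterm 1 l t = t ^ (l + 1) / (1 - t ^ (l + 1)) ^ 2 := by
      rw [eterm, eulerianPoly_one]
      simp
    rw [he]
    refine hshift.congr_fun fun k => ?_
    rw [ha]
    simp only
    rw [← pow_mul]
    push_cast
    ring_nf
  have hpos : ∀ p : ℕ × ℕ, 0 ≤ Function.uncurry a p := by
    intro p
    rw [Function.uncurry, ha]
    have := ht.1
    positivity
  have hsummaj : Summable (fun l : ℕ => ((l : ℝ) + 1) * t ^ (l + 1) / (1 - t ^ (l + 1))) := by
    have h1t : (0 : ℝ) < 1 - t := by linarith [ht.2]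
    have htp : (0 : ℝ) < t := ht.1
    refine Summable.of_nonneg_of_le
      (fun l => div_nonneg (by positivity) (by linarith [(hy l).2]))
      (fun l => ?_) ((summable_aux 1 ht.1 ht.2).mul_right (t / (1 - t)))
    calc ((l : ℝ) + 1) * t ^ (l + 1) / (1 - t ^ (l + 1))
        ≤ ((l : ℝ) + 1) * t ^ (l + 1) / (1 - t) := by
          apply div_le_div_of_nonneg_left (by positivity) h1t
          linarith [(powMemIoo l ht).2]
      _ = ((l : ℝ) + 1) ^ 1 * t ^ l * (t / (1 - t)) := by
          rw [pow_succ]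
          ring
  have hsum : Summable (Function.uncurry a) := by
    rw [summable_prod_of_nonneg hpos]
    exact ⟨fun l => (hrow l).summable,
      (hsummaj.congr fun l => ((hrow l).tsum_eq).symm).congr fun l => rfl⟩
  calc kappa1 t = ∑' l : ℕ, ((l : ℝ) + 1) * t ^ (l + 1) / (1 - t ^ (l + 1)) := rfl
    _ = ∑' (l : ℕ) (k : ℕ), a l k := tsum_congr fun l => ((hrow l).tsum_eq).symm
    _ = ∑' (l : ℕ) (k : ℕ), a k l := (Summable.tsum_comm hsum).symm
    _ = ∑' l : ℕ, eterm 1 l t := tsum_congr fun l => (hcol l).tsum_eq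

lemma kappa_eq (j : ℕ) (hj : 1 ≤ j) :
    ∀ t ∈ Set.Ioo (0 : ℝ) 1, kappa j t = ∑' l : ℕ, eterm j l t := by
  induction j, hj using Nat.le_induction with
  | base => exact fun t ht => kappa1_eq ht
  | succ j hj IH =>
    intro t ht
    obtain ⟨n, rfl⟩ : ∃ n, j = n + 1 := ⟨j - 1, by omega⟩
    have hk : kappa (n + 1 + 1) t = t * deriv (kappa (n + 1)) t := rfl
    set r : ℝ := (1 + t) / 2 with hrdef
    have hr0 : (0 : ℝ) < r := by rw [hrdef]; linarith [ht.1]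
    have hr1 : r < 1 := by rw [hrdef]; linarith [ht.2]
    have htr : t < r := by rw [hrdef]; linarith [ht.2]
    obtain ⟨C, hC0, hC⟩ := exists_eulD_bound (n + 1) hr0.le hr1
    have hsub : Set.Ioo (0 : ℝ) r ⊆ Set.Ioo (0 : ℝ) 1 :=
      Set.Ioo_subset_Ioo le_rfl hr1.le
    have hder : HasDerivAt (fun s => ∑' l : ℕ, eterm (n + 1) l s)
        (∑' l : ℕ, ((l : ℝ) + 1) ^ (n + 1) * t ^ l * eulD (n + 1) (t ^ (l + 1))) t := by
      apply hasDerivAt_tsum_of_isPreconnected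
        ((summable_aux (n + 1) hr0 hr1).mul_right C) isOpen_Ioo isPreconnected_Ioo
        (fun l y hy => hasDerivAt_eterm (n + 1) l hj (hsub hy))
        (fun l y hy => ?_) (⟨ht.1, htr⟩ : t ∈ Set.Ioo (0 : ℝ) r)
        ((summable_abs_eterm (n + 1) hj ht).of_abs) (⟨ht.1, htr⟩ : t ∈ Set.Ioo (0 : ℝ) r)
      have hy1 : y ∈ Set.Ioo (0 : ℝ) 1 := hsub hy
      have h2 : |y ^ l| ≤ r ^ l := by
        rw [abs_of_nonneg (pow_nonneg hy.1.le l)]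
        exact pow_le_pow_left₀ hy.1.le hy.2.le l
      have h3 : |eulD (n + 1) (y ^ (l + 1))| ≤ C :=
        hC _ ⟨(pow_pos hy.1 _).le, le_trans (powMemIoo l hy1).2 hy.2.le⟩
      rw [Real.norm_eq_abs, abs_mul, abs_mul, abs_pow,
        abs_of_nonneg (by positivity : (0 : ℝ) ≤ (l : ℝ) + 1)]
      calc ((l : ℝ) + 1) ^ (n + 1) * |y ^ l| * |eulD (n + 1) (y ^ (l + 1))|
          ≤ ((l : ℝ) + 1) ^ (n + 1) * r ^ l * C := by
            apply mul_le_mul (mul_le_mul le_rfl h2 (abs_nonneg _) (by positivity)) h3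
              (abs_nonneg _) (by positivity)
        _ = ((l : ℝ) + 1) ^ (n + 1) * r ^ l * C := rfl
    have hEq : deriv (kappa (n + 1)) t
        = ∑' l : ℕ, ((l : ℝ) + 1) ^ (n + 1) * t ^ l * eulD (n + 1) (t ^ (l + 1)) := by
      have heq : kappa (n + 1) =ᶠ[nhds t] fun s => ∑' l : ℕ, eterm (n + 1) l s := by
        filter_upwards [isOpen_Ioo.mem_nhds ht] with s hs
        exact IH s hs
      rw [heq.deriv_eq]
      exact hder.deriv
    rw [hk, hEq, ← tsum_mul_left]
    exact tsum_congr fun l => t_mul_deriv_term (n + 1) l ht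

theorem stmt16 (j : ℕ) (hj : 1 ≤ j) (t : ℝ) (ht : t ∈ Set.Ioo (0 : ℝ) 1) :
    kappa j t =
        ∑' l : ℕ, ((l : ℝ) + 1) ^ (j - 1) * (eulerianPoly j).eval (t ^ (l + 1)) /
          (1 - t ^ (l + 1)) ^ (j + 1) ∧
      Summable (fun l : ℕ =>
        |((l : ℝ) + 1) ^ (j - 1) * (eulerianPoly j).eval (t ^ (l + 1)) /
          (1 - t ^ (l + 1)) ^ (j + 1)|) :=
  ⟨kappa_eq j hj t ht, summable_abs_eterm j hj ht⟩
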